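/- For every n and every Motzkin path p of length n, there exists a permutation w of {1,…,n} with φ(w) = p; that is, the map φ from permutations of {1,…,n} to Motzkin paths of length n is surjective. -/

import Mathlib

/-- The three kinds of steps of a Motzkin path. -/
inductive Step : Type
  | U : Step
  | D : Step
  | H : Step
deriving DecidableEq
instance : Fintype Step :=
  ⟨{Step.U, Step.D, Step.H}, fun x => by cases x <;> simp⟩
/-- Number of indices `i` with `i < m` (i.e. in the prefix of length `m`,
with 0-based indexing) at which the word `p` has the letter `s`. -/
def countIn {n : ℕ} (p : Fin n → Step) (s : Step) (m : ℕ) : ℕ :=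
  (Finset.univ.filter (fun i : Fin n => (i : ℕ) < m ∧ p i = s)).card
/-- A word `p` of length `n` over `{U, D, H}` is a Motzkin path if every
prefix contains at least as many `U`'s as `D`'s and the whole word contains
equally many `U`'s and `D`'s. -/
def IsMotzkin {n : ℕ} (p : Fin n → Step) : Prop :=
  (∀ m ≤ n, countIn p Step.D m ≤ countIn p Step.U m) ∧
  countIn p Step.U n = countIn p Step.D n
/-- The map `φ` from permutations of `{1,…,n}` to words over `{U,D,H}`:
`p_i = U` if `w⁻¹(i) > i < w(i)`, `p_i = D` if `w⁻¹(i) < i > w(i)`,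
and `p_i = H` otherwise. -/
def phi {n : ℕ} (w : Equiv.Perm (Fin n)) : Fin n → Step := fun i =>
  if i < w.symm i ∧ i < w i then Step.U
  else if w.symm i < i ∧ w i < i then Step.D
  else Step.H

/-- If a finset `s` of `Fin n` has at least `j+1` elements `≤ d`, then its
`j`-th smallest element is `≤ d`. -/
lemma orderEmbOfFin_le_of_card {n k : ℕ} {s : Finset (Fin n)} (hs : s.card = k)
    (j : Fin k) (d : Fin n)
    (h : (j : ℕ) + 1 ≤ (s.filter fun i => i ≤ d).card) :
    s.orderEmbOfFin hs j ≤ d := by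
  by_contra hlt
  push_neg at hlt
  have hsub : (s.filter fun i => i ≤ d) ⊆ (Finset.Iio j).image (s.orderEmbOfFin hs) := by
    intro x hx
    simp only [Finset.mem_filter] at hx
    obtain ⟨i, hi⟩ : ∃ i, s.orderEmbOfFin hs i = x := by
      have := Finset.range_orderEmbOfFin s hs
      have hx' : x ∈ (Set.range (s.orderEmbOfFin hs)) := by rw [this]; exact_mod_cast hx.1
      exact hx'
    have hij : i < j := by
      by_contra hji
      push_neg at hji
      have : s.orderEmbOfFin hs j ≤ s.orderEmbOfFin hs i := (s.orderEmbOfFin hs).monotone hji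
      rw [hi] at this
      exact absurd (this.trans hx.2) (not_le.mpr hlt)
    exact Finset.mem_image.mpr ⟨i, Finset.mem_Iio.mpr hij, hi⟩
  have hcard := Finset.card_le_card hsub
  have : ((Finset.Iio j).image (s.orderEmbOfFin hs)).card ≤ (j : ℕ) := by
    calc ((Finset.Iio j).image (s.orderEmbOfFin hs)).card ≤ (Finset.Iio j).card :=
          Finset.card_image_le
      _ = (j : ℕ) := Fin.card_Iio j
  omega

/-- The `j`-th smallest element of `s` has at least `j+1` elements of `s` at or below it. -/
lemma card_le_of_orderEmbOfFin {n k : ℕ} {s : Finset (Fin n)} (hs : s.card = k) (j : Fin k) :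
    (j : ℕ) + 1 ≤ (s.filter fun i => i ≤ s.orderEmbOfFin hs j).card := by
  have hsub : (Finset.Iic j).image (s.orderEmbOfFin hs) ⊆
      (s.filter fun i => i ≤ s.orderEmbOfFin hs j) := by
    intro x hx
    obtain ⟨i, hi, rfl⟩ := Finset.mem_image.mp hx
    refine Finset.mem_filter.mpr ⟨Finset.orderEmbOfFin_mem s hs i, ?_⟩
    exact (s.orderEmbOfFin hs).monotone (Finset.mem_Iic.mp hi)
  calc (j : ℕ) + 1 = (Finset.Iic j).card := (Fin.card_Iic j).symm
    _ = ((Finset.Iic j).image (s.orderEmbOfFin hs)).card :=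
        (Finset.card_image_of_injective _ (s.orderEmbOfFin hs).injective).symm
    _ ≤ _ := Finset.card_le_card hsub

/-- Key lemma: comparing matched elements of two equinumerous finsets. -/
lemma key_le {n k : ℕ} {s t : Finset (Fin n)} (hs : s.card = k) (ht : t.card = k)
    (H : ∀ m ≤ n, (t.filter fun i : Fin n => (i : ℕ) < m).card ≤ (s.filter fun i : Fin n => (i : ℕ) < m).card)
    (j : Fin k) : s.orderEmbOfFin hs j ≤ t.orderEmbOfFin ht j := by
  set d := t.orderEmbOfFin ht j with hd
  have h1 : (j : ℕ) + 1 ≤ (t.filter fun i => i ≤ d).card := card_le_of_orderEmbOfFin ht j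
  have hmn : (d : ℕ) + 1 ≤ n := d.isLt
  have h2 := H ((d : ℕ) + 1) hmn
  have heq1 : (t.filter fun i : Fin n => (i : ℕ) < (d : ℕ) + 1) = (t.filter fun i => i ≤ d) := by
    apply Finset.filter_congr; intro x _
    simp only [Nat.lt_succ_iff, Fin.le_def, eq_iff_iff]
  have heq2 : (s.filter fun i : Fin n => (i : ℕ) < (d : ℕ) + 1) = (s.filter fun i => i ≤ d) := by
    apply Finset.filter_congr; intro x _
    simp only [Nat.lt_succ_iff, Fin.le_def, eq_iff_iff]
  rw [heq1, heq2] at h2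
  exact orderEmbOfFin_le_of_card hs j d (h1.trans h2)

/-- For every `n` and every Motzkin path `p` of length `n`, there exists a
permutation `w` of `{1,…,n}` with `φ(w) = p`; that is, `φ` is surjective
onto Motzkin paths of length `n`. -/
theorem phi_surjective_onto_motzkin (n : ℕ) (p : Fin n → Step) (hp : IsMotzkin p) :
    ∃ w : Equiv.Perm (Fin n), phi w = p := by
  classical
  set Us : Finset (Fin n) := Finset.univ.filter (fun i => p i = Step.U) with hUs
  set Ds : Finset (Fin n) := Finset.univ.filter (fun i => p i = Step.D) with hDs
  have hcount : ∀ (s : Step) (m : ℕ), countIn p s m =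
      ((Finset.univ.filter (fun i => p i = s)).filter fun i : Fin n => (i : ℕ) < m).card := by
    intro s m
    unfold countIn
    congr 1
    rw [Finset.filter_filter]
    apply Finset.filter_congr
    intro x _; simp [and_comm]
  have hk : Ds.card = Us.card := by
    have h1 := hcount Step.U n
    have h2 := hcount Step.D n
    have h3 : ∀ (s : Step), ((Finset.univ.filter (fun i => p i = s)).filter
        fun i : Fin n => (i : ℕ) < n).card = (Finset.univ.filter (fun i => p i = s)).card := by
      intro s; congr 1; apply Finset.filter_true_of_mem; intro x _; exact x.isLt
    have := hp.2
    rw [h1, h2, h3, h3] at this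
    exact this.symm
  set k := Us.card with hkdef
  have hU : Us.card = k := rfl
  have hD : Ds.card = k := hk
  have Hle : ∀ m ≤ n, (Ds.filter fun i : Fin n => (i : ℕ) < m).card ≤
      (Us.filter fun i : Fin n => (i : ℕ) < m).card := by
    intro m hm
    have := hp.1 m hm
    rwa [hcount Step.D m, hcount Step.U m] at this
  -- the order isomorphisms
  have memU : ∀ i, p i = Step.U → i ∈ Us := fun i h => Finset.mem_filter.mpr ⟨Finset.mem_univ i, h⟩
  have memD : ∀ i, p i = Step.D → i ∈ Ds := fun i h => Finset.mem_filter.mpr ⟨Finset.mem_univ i, h⟩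
  have pU : ∀ j : Fin k, p (Us.orderEmbOfFin hU j) = Step.U := fun j =>
    (Finset.mem_filter.mp (Finset.orderEmbOfFin_mem Us hU j)).2
  have pD : ∀ j : Fin k, p (Ds.orderEmbOfFin hD j) = Step.D := fun j =>
    (Finset.mem_filter.mp (Finset.orderEmbOfFin_mem Ds hD j)).2
  have hlt : ∀ j : Fin k, Us.orderEmbOfFin hU j < Ds.orderEmbOfFin hD j := by
    intro j
    have h1 := key_le hU hD Hle j
    have hne : Us.orderEmbOfFin hU j ≠ Ds.orderEmbOfFin hD j := by
      intro h
      have := pU j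
      rw [h, pD j] at this
      exact Step.noConfusion this
    exact lt_of_le_of_ne h1 hne
  -- index functions
  have hsurjU : ∀ i ∈ Us, ∃ j : Fin k, Us.orderEmbOfFin hU j = i := by
    intro i hi
    have : (i : Fin n) ∈ Set.range (Us.orderEmbOfFin hU) := by
      rw [Finset.range_orderEmbOfFin]; exact_mod_cast hi
    exact this
  have hsurjD : ∀ i ∈ Ds, ∃ j : Fin k, Ds.orderEmbOfFin hD j = i := by
    intro i hi
    have : (i : Fin n) ∈ Set.range (Ds.orderEmbOfFin hD) := by
      rw [Finset.range_orderEmbOfFin]; exact_mod_cast hi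
    exact this
  -- define the involution
  set f : Fin n → Fin n := fun i =>
    if h : p i = Step.U then Ds.orderEmbOfFin hD (Classical.choose (hsurjU i (memU i h)))
    else if h : p i = Step.D then Us.orderEmbOfFin hU (Classical.choose (hsurjD i (memD i h)))
    else i with hf
  have hidxU_spec : ∀ i (h : p i = Step.U),
      Us.orderEmbOfFin hU (Classical.choose (hsurjU i (memU i h))) = i := by
    intro i h
    exact Classical.choose_spec (hsurjU i (memU i h))
  have hidxD_spec : ∀ i (h : p i = Step.D),
      Ds.orderEmbOfFin hD (Classical.choose (hsurjD i (memD i h))) = i := by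
    intro i h
    exact Classical.choose_spec (hsurjD i (memD i h))
  -- f on a U-position
  have fU : ∀ i (h : p i = Step.U),
      f i = Ds.orderEmbOfFin hD (Classical.choose (hsurjU i (memU i h))) := by
    intro i h; simp only [hf, dif_pos h]
  have fD : ∀ i (h : p i = Step.D),
      f i = Us.orderEmbOfFin hU (Classical.choose (hsurjD i (memD i h))) := by
    intro i h
    simp only [hf]
    rw [dif_neg (by rw [h]; exact fun hc => Step.noConfusion hc), dif_pos h]
  have fH : ∀ i, p i = Step.H → f i = i := by
    intro i h
    simp only [hf]
    rw [dif_neg (by rw [h]; exact fun hc => Step.noConfusion hc),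
        dif_neg (by rw [h]; exact fun hc => Step.noConfusion hc)]
  have hinv : ∀ i, f (f i) = i := by
    intro i
    cases hpi : p i with
    | U =>
        rw [fU i hpi]
        have hpd : p (Ds.orderEmbOfFin hD (Classical.choose (hsurjU i (memU i hpi)))) =
            Step.D := pD _
        rw [fD _ hpd]
        have hj : Classical.choose (hsurjD _ (memD _ hpd)) =
            Classical.choose (hsurjU i (memU i hpi)) := by
          apply (Ds.orderEmbOfFin hD).injective
          exact hidxD_spec _ hpd
        rw [hj]
        exact hidxU_spec i hpi
    | D =>
        rw [fD i hpi]
        have hpu : p (Us.orderEmbOfFin hU (Classical.choose (hsurjD i (memD i hpi)))) =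
            Step.U := pU _
        rw [fU _ hpu]
        have hj : Classical.choose (hsurjU _ (memU _ hpu)) =
            Classical.choose (hsurjD i (memD i hpi)) := by
          apply (Us.orderEmbOfFin hU).injective
          exact hidxU_spec _ hpu
        rw [hj]
        exact hidxD_spec i hpi
    | H => rw [fH i hpi, fH i hpi]
  refine ⟨⟨f, f, hinv, hinv⟩, ?_⟩
  funext i
  have hsymm : (⟨f, f, hinv, hinv⟩ : Equiv.Perm (Fin n)).symm i = f i := rfl
  have happ : (⟨f, f, hinv, hinv⟩ : Equiv.Perm (Fin n)) i = f i := rfl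
  unfold phi
  rw [hsymm, happ]
  cases hpi : p i with
  | U =>
      have hfi : i < f i := by
        rw [fU i hpi]
        have := hlt (Classical.choose (hsurjU i (memU i hpi)))
        rwa [hidxU_spec i hpi] at this
      rw [if_pos ⟨hfi, hfi⟩]
  | D =>
      have hfi : f i < i := by
        rw [fD i hpi]
        have := hlt (Classical.choose (hsurjD i (memD i hpi)))
        rwa [hidxD_spec i hpi] at this
      rw [if_neg (by rintro ⟨h1, -⟩; exact absurd h1 (not_lt.mpr hfi.le)),
          if_pos ⟨hfi, hfi⟩]
  | H =>
      have hfi : f i = i := fH i hpi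
      rw [hfi]
      rw [if_neg (by rintro ⟨h1, -⟩; exact lt_irrefl i h1),
          if_neg (by rintro ⟨h1, -⟩; exact lt_irrefl i h1)]
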